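/- (Sanov's theorem for a finite alphabet) Let {X_t} be an i.i.d. process taking values in a finite set A = {1,...,n} with one-dimensional marginal μ ∈ S_n, and let φ(x_1^l) ∈ S_n be the empirical singleton measure. Then the S_n-valued process {φ(x_1^l)} satisfies the large deviation property with rate function I(ν) = D(ν‖μ): for every open Γ ⊆ S_n, −inf_{ν∈Γ} D(ν‖μ) ≤ liminf_{l→∞} (1/l) log Pr{φ(x_1^l) ∈ Γ}, and for every closed Γ ⊆ S_n, limsup_{l→∞} (1/l) log Pr{φ(x_1^l) ∈ Γ} ≤ −inf_{ν∈Γ} D(ν‖μ). -/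

import Mathlib

open Finset Filter

/-- The simplex `S_n` of probability vectors. -/
def simplex (n : ℕ) : Set (Fin n → ℝ) := {p | (∀ i, 0 ≤ p i) ∧ ∑ i, p i = 1}

open scoped Classical in
/-- Relative entropy `D(ν‖μ)`, equal to `+∞` unless `ν` is dominated by `μ`. -/
noncomputable def DKLe {n : ℕ} (ν μ : Fin n → ℝ) : EReal :=
  if ∀ i, μ i = 0 → ν i = 0 then (((∑ i, ν i * Real.log (ν i / μ i)) : ℝ) : EReal) else ⊤

/-- Empirical singleton measure of a sample path of length `l = m+1`. -/
noncomputable def emp1 {n m : ℕ} (x : Fin (m+1) → Fin n) : Fin n → ℝ :=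
  fun i => (∑ t : Fin (m+1), if x t = i then (1:ℝ) else 0) / (m+1)

open scoped Classical in
/-- `Pr{φ(x_1^l) ∈ Γ}` for the i.i.d. process with marginal `μ`:
`Pr{X_1^l = x_1^l} = ∏_t μ(x_t)`. -/
noncomputable def prEventIID {n : ℕ} (μ : Fin n → ℝ) (m : ℕ) (Γ : Set (Fin n → ℝ)) : ℝ :=
  ∑ x : Fin (m+1) → Fin n, if emp1 x ∈ Γ then ∏ t, μ (x t) else 0

/-- Extended-real logarithm, `elog p = −∞` for `p ≤ 0`. -/
noncomputable def elog (p : ℝ) : EReal := if p ≤ 0 then ⊥ else ((Real.log p : ℝ) : EReal)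

/-- ℓ¹ (total variation) distance on probability vectors. -/
def dist1v {n : ℕ} (p q : Fin n → ℝ) : ℝ := ∑ i, |p i - q i|

def OpenInV {n : ℕ} (S Γ : Set (Fin n → ℝ)) : Prop :=
  ∀ ζ ∈ Γ, ∃ ε > 0, ∀ ξ ∈ S, dist1v ξ ζ < ε → ξ ∈ Γ

def ClosedInV {n : ℕ} (S Γ : Set (Fin n → ℝ)) : Prop := OpenInV S (S \ Γ)
open scoped Classical

/-- number of occurrences of `i` in the sample `x` -/
noncomputable def cnt {n m : ℕ} (x : Fin (m+1) → Fin n) (i : Fin n) : ℕ :=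
  (Finset.univ.filter (fun t => x t = i)).card

lemma sum_ite_eq_cnt {n m : ℕ} (x : Fin (m+1) → Fin n) (i : Fin n) :
    (∑ t : Fin (m+1), if x t = i then (1:ℝ) else 0) = (cnt x i : ℝ) := by
  rw [Finset.sum_boole, cnt]

lemma emp1_eq_cnt {n m : ℕ} (x : Fin (m+1) → Fin n) (i : Fin n) :
    emp1 x i = (cnt x i : ℝ) / (m+1) := by
  rw [emp1, sum_ite_eq_cnt]

lemma cnt_le {n m : ℕ} (x : Fin (m+1) → Fin n) (i : Fin n) : cnt x i ≤ m+1 := by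
  classical
  calc cnt x i ≤ (Finset.univ : Finset (Fin (m+1))).card := Finset.card_filter_le _ _
  _ = m+1 := by simp

lemma sum_cnt {n m : ℕ} (x : Fin (m+1) → Fin n) : ∑ i, cnt x i = m+1 := by
  classical
  have := Finset.card_eq_sum_card_fiberwise (f := x) (s := Finset.univ)
    (t := Finset.univ) (fun t _ => Finset.mem_univ (x t))
  simpa [cnt] using this.symm

lemma emp1_nonneg {n m : ℕ} (x : Fin (m+1) → Fin n) (i : Fin n) : 0 ≤ emp1 x i := by
  rw [emp1_eq_cnt]; positivity

lemma emp1_mem_simplex {n m : ℕ} (x : Fin (m+1) → Fin n) : emp1 x ∈ simplex n := by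
  refine ⟨emp1_nonneg x, ?_⟩
  have h1 : ∑ i, emp1 x i = (∑ i, (cnt x i : ℝ)) / (m+1) := by
    rw [Finset.sum_div]; exact Finset.sum_congr rfl fun i _ => emp1_eq_cnt x i
  rw [h1, ← Nat.cast_sum, sum_cnt]
  field_simp
  simp

lemma sum_prod_eq {n : ℕ} (l : ℕ) (g : Fin l → Fin n → ℝ) :
    ∑ x : Fin l → Fin n, ∏ t, g t (x t) = ∏ t, ∑ j, g t j := by
  classical
  rw [Finset.prod_univ_sum, Fintype.piFinset_univ]

lemma prod_comp_eq_prod_pow {n m : ℕ} (x : Fin (m+1) → Fin n) (w : Fin n → ℝ) :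
    ∏ t, w (x t) = ∏ i, w i ^ cnt x i := by
  classical
  rw [← Finset.prod_fiberwise_of_maps_to (fun t _ => Finset.mem_univ (x t)) (fun t => w (x t))]
  refine Finset.prod_congr rfl fun i _ => ?_
  rw [Finset.prod_congr rfl (fun t ht => by rw [(Finset.mem_filter.1 ht).2] : ∀ t ∈ Finset.univ.filter (fun t => x t = i), w (x t) = w i), Finset.prod_const, cnt]

lemma prod_single {l : ℕ} (s : Fin l) (h : Fin l → ℝ) (hone : ∀ r, r ≠ s → h r = 1) :
    ∏ r, h r = h s := by
  classical
  rw [← Finset.mul_prod_erase Finset.univ h (Finset.mem_univ s), Finset.prod_eq_one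
    (fun r hr => hone r (Finset.ne_of_mem_erase hr)), mul_one]

lemma prod_double {l : ℕ} {s t : Fin l} (hst : s ≠ t) (h : Fin l → ℝ)
    (hone : ∀ r, r ≠ s → r ≠ t → h r = 1) : ∏ r, h r = h s * h t := by
  classical
  rw [← Finset.mul_prod_erase Finset.univ h (Finset.mem_univ s),
    ← Finset.mul_prod_erase _ h (Finset.mem_erase.2 ⟨Ne.symm hst, Finset.mem_univ t⟩),
    Finset.prod_eq_one (fun r hr => hone r (Finset.ne_of_mem_erase (Finset.mem_of_mem_erase hr))
      (Finset.ne_of_mem_erase hr)), mul_one]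
lemma Eone {n : ℕ} (w : Fin n → ℝ) (hw1 : ∑ j, w j = 1) (l : ℕ) :
    ∑ x : Fin l → Fin n, ∏ t, w (x t) = 1 := by
  rw [sum_prod_eq l (fun _ j => w j)]
  simp [hw1]

lemma Ediag {n : ℕ} (w : Fin n → ℝ) (hw1 : ∑ j, w j = 1) {l : ℕ} (t : Fin l)
    (b : Fin n → ℝ) :
    ∑ x : Fin l → Fin n, (∏ r, w (x r)) * b (x t) = ∑ j, w j * b j := by
  classical
  have key : ∀ x : Fin l → Fin n,
      (∏ r, w (x r)) * b (x t) = ∏ r, (w (x r) * (if r = t then b (x r) else 1)) := by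
    intro x
    rw [Finset.prod_mul_distrib]
    congr 1
    rw [prod_single t _ (fun r hr => by simp [hr])]
    simp
  calc ∑ x : Fin l → Fin n, (∏ r, w (x r)) * b (x t)
      = ∑ x : Fin l → Fin n, ∏ r, (fun r j => w j * (if r = t then b j else 1)) r (x r) :=
        Finset.sum_congr rfl fun x _ => key x
    _ = ∏ r, ∑ j, w j * (if r = t then b j else 1) := by
        exact sum_prod_eq l (fun r j => w j * (if r = t then b j else 1))
    _ = ∑ j, w j * b j := by
        rw [prod_single t _ (fun r hr => by simp [hr, hw1])]
        simp

lemma Epair {n : ℕ} (w : Fin n → ℝ) (hw1 : ∑ j, w j = 1) {l : ℕ} {s t : Fin l}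
    (hst : s ≠ t) (b c : Fin n → ℝ) :
    ∑ x : Fin l → Fin n, (∏ r, w (x r)) * (b (x s) * c (x t)) =
      (∑ j, w j * b j) * (∑ j, w j * c j) := by
  classical
  have key : ∀ x : Fin l → Fin n,
      (∏ r, w (x r)) * (b (x s) * c (x t)) =
        ∏ r, (w (x r) * (if r = s then b (x r) else if r = t then c (x r) else 1)) := by
    intro x
    rw [Finset.prod_mul_distrib]
    congr 1
    rw [prod_double hst _ (fun r hrs hrt => by simp [hrs, hrt])]
    simp [hst, Ne.symm hst]
  calc ∑ x : Fin l → Fin n, (∏ r, w (x r)) * (b (x s) * c (x t))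
      = ∑ x : Fin l → Fin n,
          ∏ r, (fun r j => w j * (if r = s then b j else if r = t then c j else 1)) r (x r) :=
        Finset.sum_congr rfl fun x _ => key x
    _ = ∏ r, ∑ j, w j * (if r = s then b j else if r = t then c j else 1) := by
        exact sum_prod_eq l (fun r j => w j * (if r = s then b j else if r = t then c j else 1))
    _ = (∑ j, w j * b j) * (∑ j, w j * c j) := by
        rw [prod_double hst _ (fun r hrs hrt => by simp [hrs, hrt, hw1])]
        simp [hst, Ne.symm hst]
lemma Evar {n : ℕ} (w : Fin n → ℝ) (hw0 : ∀ j, 0 ≤ w j) (hw1 : ∑ j, w j = 1)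
    (l : ℕ) (i : Fin n) :
    ∑ x : Fin l → Fin n, (∏ r, w (x r)) * (∑ t, ((if x t = i then (1:ℝ) else 0) - w i))^2
      ≤ l / 4 := by
  classical
  set a : Fin n → ℝ := fun j => (if j = i then (1:ℝ) else 0) - w i with ha
  have ha0 : ∑ j, w j * a j = 0 := by
    simp only [ha, mul_sub, Finset.sum_sub_distrib, mul_ite, mul_one, mul_zero,
      Finset.sum_ite_eq', Finset.mem_univ, if_true, ← Finset.sum_mul, hw1, one_mul]
    ring
  have ha2 : ∑ j, w j * (a j * a j) = w i - w i^2 := by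
    have hsq : ∀ j, a j * a j = w i^2 + (if j = i then 1 - 2*w i else 0) := by
      intro j; by_cases h : j = i <;> simp [ha, h] <;> ring
    calc ∑ j, w j * (a j * a j) = ∑ j, (w j * w i^2 + (if j = i then w j * (1 - 2*w i) else 0)) := by
          refine Finset.sum_congr rfl fun j _ => ?_
          rw [hsq j]; by_cases h : j = i <;> simp [h] <;> ring
      _ = w i - w i^2 := by
          rw [Finset.sum_add_distrib, ← Finset.sum_mul, hw1, Finset.sum_ite_eq',]
          simp; ring
  calc ∑ x : Fin l → Fin n, (∏ r, w (x r)) * (∑ t, ((if x t = i then (1:ℝ) else 0) - w i))^2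
      = ∑ x : Fin l → Fin n, ∑ s, ∑ t, (∏ r, w (x r)) * (a (x s) * a (x t)) := by
        refine Finset.sum_congr rfl fun x _ => ?_
        rw [show (∑ t, ((if x t = i then (1:ℝ) else 0) - w i)) = ∑ t, a (x t) from rfl,
          sq, Finset.sum_mul_sum, Finset.mul_sum]
        refine Finset.sum_congr rfl fun s _ => ?_
        rw [Finset.mul_sum]
    _ = ∑ s, ∑ t, ∑ x : Fin l → Fin n, (∏ r, w (x r)) * (a (x s) * a (x t)) := by
        rw [Finset.sum_comm]
        exact Finset.sum_congr rfl fun s _ => Finset.sum_comm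
    _ = ∑ _s : Fin l, (w i - w i^2) := by
        refine Finset.sum_congr rfl fun s _ => ?_
        rw [Finset.sum_eq_single s]
        · exact (Ediag w hw1 s fun j => a j * a j).trans ha2
        · intro t _ hts
          exact (Epair w hw1 (Ne.symm hts) a a).trans (by rw [ha0]; ring)
        · intro h; exact absurd (Finset.mem_univ s) h
    _ = l * (w i - w i^2) := by
        rw [Finset.sum_const, Finset.card_univ, nsmul_eq_mul]; simp
    _ ≤ l / 4 := by nlinarith [sq_nonneg (w i - 1/2), Nat.cast_nonneg (α := ℝ) l]

lemma single_var_le {n m : ℕ} (w : Fin n → ℝ) (hw0 : ∀ j, 0 ≤ w j) (hw1 : ∑ j, w j = 1)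
    (i : Fin n) :
    ∑ x : Fin (m+1) → Fin n, (∏ r, w (x r)) * (emp1 x i - w i)^2 ≤ 1 / (4*(m+1)) := by
  classical
  have hm1 : (0:ℝ) < (m:ℝ)+1 := by positivity
  have hrep : ∀ x : Fin (m+1) → Fin n,
      emp1 x i - w i = (∑ t, ((if x t = i then (1:ℝ) else 0) - w i)) / ((m:ℝ)+1) := by
    intro x
    have h1 : ∑ t, ((if x t = i then (1:ℝ) else 0) - w i)
        = (∑ t : Fin (m+1), if x t = i then (1:ℝ) else 0) - ((m:ℝ)+1) * w i := by
      rw [Finset.sum_sub_distrib, Finset.sum_const, Finset.card_univ, nsmul_eq_mul]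
      simp [Fintype.card_fin]
      try push_cast
      try ring
    rw [h1, emp1]
    push_cast
    field_simp
  have hvar := Evar w hw0 hw1 (m+1) i
  calc ∑ x : Fin (m+1) → Fin n, (∏ r, w (x r)) * (emp1 x i - w i)^2
      = (∑ x : Fin (m+1) → Fin n,
          (∏ r, w (x r)) * (∑ t, ((if x t = i then (1:ℝ) else 0) - w i))^2) / (((m:ℝ)+1)^2) := by
        rw [Finset.sum_div]
        refine Finset.sum_congr rfl fun x _ => ?_
        rw [hrep x, div_pow, mul_div_assoc]
    _ ≤ (((m:ℕ)+1 : ℝ) / 4) / (((m:ℝ)+1)^2) := by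
        gcongr
        exact_mod_cast hvar
    _ = 1 / (4*((m:ℝ)+1)) := by
        push_cast
        field_simp
lemma prod_nonneg_of {n : ℕ} {w : Fin n → ℝ} (hw0 : ∀ j, 0 ≤ w j) {l : ℕ}
    (x : Fin l → Fin n) : 0 ≤ ∏ t, w (x t) :=
  Finset.prod_nonneg fun t _ => hw0 (x t)

lemma prob_far_le {n m : ℕ} (w : Fin n → ℝ) (hw0 : ∀ j, 0 ≤ w j) (hw1 : ∑ j, w j = 1)
    (δ : ℝ) (hδ : 0 < δ) :
    ∑ x ∈ Finset.univ.filter (fun x : Fin (m+1) → Fin n => ¬ dist1v (emp1 x) w < δ),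
      ∏ t, w (x t) ≤ (n:ℝ)^3 / (4 * ((m:ℝ)+1) * δ^2) := by
  classical
  rcases Nat.eq_zero_or_pos n with hn | hn
  · subst hn
    have hemp : IsEmpty (Fin (m+1) → Fin 0) := ⟨fun x => (x 0).elim0⟩
    rw [Finset.univ_eq_empty, Finset.filter_empty, Finset.sum_empty]
    positivity
  have hnR : (0:ℝ) < n := by exact_mod_cast hn
  -- each far point has large quadratic deviation
  have key1 : ∀ x : Fin (m+1) → Fin n, ¬ dist1v (emp1 x) w < δ →
      δ^2/(n:ℝ)^2 ≤ ∑ i, (emp1 x i - w i)^2 := by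
    intro x hx
    have hd : δ ≤ ∑ i, |emp1 x i - w i| := le_of_not_gt hx
    have hex : ∃ i : Fin n, δ/(n:ℝ) ≤ |emp1 x i - w i| := by
      by_contra hcon
      push_neg at hcon
      have : ∑ i, |emp1 x i - w i| < ∑ _i : Fin n, δ/(n:ℝ) := by
        refine Finset.sum_lt_sum_of_nonempty ?_ fun i _ => hcon i
        exact Finset.univ_nonempty_iff.2 (Fin.pos_iff_nonempty.mp hn)
      rw [Finset.sum_const, Finset.card_univ, Fintype.card_fin, nsmul_eq_mul] at this
      rw [mul_div_cancel₀ _ (ne_of_gt hnR)] at this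
      linarith
    obtain ⟨i, hi⟩ := hex
    calc δ^2/(n:ℝ)^2 = (δ/(n:ℝ))^2 := by rw [div_pow]
      _ ≤ |emp1 x i - w i|^2 := by
          have h0 : 0 ≤ δ/(n:ℝ) := by positivity
          exact pow_le_pow_left₀ h0 hi 2
      _ = (emp1 x i - w i)^2 := sq_abs _
      _ ≤ ∑ i, (emp1 x i - w i)^2 :=
          Finset.single_le_sum (f := fun i => (emp1 x i - w i)^2) (fun j _ => sq_nonneg _)
            (Finset.mem_univ i)
  have hc : (0:ℝ) < (n:ℝ)^2/δ^2 := by positivity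
  calc ∑ x ∈ Finset.univ.filter (fun x : Fin (m+1) → Fin n => ¬ dist1v (emp1 x) w < δ),
        ∏ t, w (x t)
      ≤ ∑ x ∈ Finset.univ.filter (fun x : Fin (m+1) → Fin n => ¬ dist1v (emp1 x) w < δ),
          (∏ t, w (x t)) * ((∑ i, (emp1 x i - w i)^2) * ((n:ℝ)^2/δ^2)) := by
        refine Finset.sum_le_sum fun x hx => ?_
        have hx' := (Finset.mem_filter.1 hx).2
        refine le_mul_of_one_le_right (prod_nonneg_of hw0 x) ?_
        have h1 := key1 x hx'
        calc (1:ℝ) = (δ^2/(n:ℝ)^2) * ((n:ℝ)^2/δ^2) := by field_simp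
          _ ≤ (∑ i, (emp1 x i - w i)^2) * ((n:ℝ)^2/δ^2) := by
              exact mul_le_mul_of_nonneg_right h1 (le_of_lt hc)
    _ ≤ ∑ x : Fin (m+1) → Fin n,
          (∏ t, w (x t)) * ((∑ i, (emp1 x i - w i)^2) * ((n:ℝ)^2/δ^2)) := by
        refine Finset.sum_le_sum_of_subset_of_nonneg (Finset.filter_subset _ _) ?_
        intro x _ _
        have := prod_nonneg_of hw0 x
        have h2 : (0:ℝ) ≤ ∑ i, (emp1 x i - w i)^2 := Finset.sum_nonneg fun i _ => sq_nonneg _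
        positivity
    _ = ∑ i, ∑ x : Fin (m+1) → Fin n,
          ((n:ℝ)^2/δ^2) * ((∏ t, w (x t)) * (emp1 x i - w i)^2) := by
        rw [Finset.sum_comm]
        refine Finset.sum_congr rfl fun x _ => ?_
        rw [← Finset.mul_sum, ← Finset.mul_sum]
        ring
    _ = ((n:ℝ)^2/δ^2) * ∑ i, ∑ x : Fin (m+1) → Fin n, (∏ t, w (x t)) * (emp1 x i - w i)^2 := by
        rw [Finset.mul_sum]
        exact Finset.sum_congr rfl fun i _ => (Finset.mul_sum _ _ _).symm
    _ ≤ ((n:ℝ)^2/δ^2) * ∑ _i : Fin n, 1/(4*((m:ℝ)+1)) := by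
        refine mul_le_mul_of_nonneg_left ?_ (le_of_lt hc)
        exact Finset.sum_le_sum fun i _ => single_var_le w hw0 hw1 i
    _ = (n:ℝ)^3 / (4 * ((m:ℝ)+1) * δ^2) := by
        rw [Finset.sum_const, Finset.card_univ, Fintype.card_fin, nsmul_eq_mul]
        field_simp
lemma prod_pow_eq_exp {n : ℕ} (w : Fin n → ℝ) (k : Fin n → ℕ)
    (h : ∀ i, k i ≠ 0 → 0 < w i) :
    ∏ i, w i ^ k i = Real.exp (∑ i, (k i : ℝ) * Real.log (w i)) := by
  rw [Real.exp_sum]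
  refine Finset.prod_congr rfl fun i _ => ?_
  by_cases hk : k i = 0
  · simp [hk]
  · rw [Real.exp_nat_mul, Real.exp_log (h i hk)]

lemma emp1_eq_zero_of_cnt {n m : ℕ} (x : Fin (m+1) → Fin n) {i : Fin n}
    (h : cnt x i = 0) : emp1 x i = 0 := by
  rw [emp1_eq_cnt, h]; simp

lemma emp1_pos_of_cnt {n m : ℕ} (x : Fin (m+1) → Fin n) {i : Fin n}
    (h : cnt x i ≠ 0) : 0 < emp1 x i := by
  rw [emp1_eq_cnt]
  have h1 : 0 < (cnt x i : ℝ) := by exact_mod_cast Nat.pos_of_ne_zero h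
  positivity

lemma mul_emp1_eq_cnt {n m : ℕ} (x : Fin (m+1) → Fin n) (i : Fin n) :
    ((m:ℝ)+1) * emp1 x i = (cnt x i : ℝ) := by
  rw [emp1_eq_cnt]
  have : ((m:ℝ)+1) ≠ 0 := by positivity
  field_simp

lemma exists_eq_of_cnt_ne_zero {n m : ℕ} (x : Fin (m+1) → Fin n) {i : Fin n}
    (h : cnt x i ≠ 0) : ∃ t, x t = i := by
  classical
  obtain ⟨t, ht⟩ := Finset.card_pos.mp (Nat.pos_of_ne_zero h)
  exact ⟨t, (Finset.mem_filter.1 ht).2⟩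

lemma key_ub {n : ℕ} (μ : Fin n → ℝ) (hμ0 : ∀ i, 0 ≤ μ i) {m : ℕ}
    (x : Fin (m+1) → Fin n) (c : ℝ) (hc : (c : EReal) ≤ DKLe (emp1 x) μ) :
    ∏ t, μ (x t) ≤ Real.exp (-(((m:ℝ)+1) * c)) * ∏ t, (emp1 x) (x t) := by
  classical
  by_cases hdom : ∀ i, μ i = 0 → emp1 x i = 0
  · have hD : DKLe (emp1 x) μ
        = ((∑ i, emp1 x i * Real.log (emp1 x i / μ i) : ℝ) : EReal) := by
      rw [DKLe, if_pos hdom]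
    set D := ∑ i, emp1 x i * Real.log (emp1 x i / μ i) with hDdef
    have hcD : c ≤ D := by rw [hD] at hc; exact_mod_cast hc
    have hν0 : ∀ i, cnt x i ≠ 0 → 0 < emp1 x i := fun i hi => emp1_pos_of_cnt x hi
    have hμpos : ∀ i, cnt x i ≠ 0 → 0 < μ i := by
      intro i hi
      rcases (hμ0 i).eq_or_lt with h | h
      · exact absurd (hdom i h.symm) (ne_of_gt (hν0 i hi))
      · exact h
    have h1 : ∏ t, μ (x t) = Real.exp (∑ i, (cnt x i : ℝ) * Real.log (μ i)) := by
      rw [prod_comp_eq_prod_pow, prod_pow_eq_exp μ (cnt x) hμpos]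
    have h2 : ∏ t, emp1 x (x t) = Real.exp (∑ i, (cnt x i : ℝ) * Real.log (emp1 x i)) := by
      rw [prod_comp_eq_prod_pow, prod_pow_eq_exp _ (cnt x) hν0]
    have h3 : ∑ i, (cnt x i : ℝ) * Real.log (emp1 x i) - ∑ i, (cnt x i : ℝ) * Real.log (μ i)
        = ((m:ℝ)+1) * D := by
      rw [← Finset.sum_sub_distrib, hDdef, Finset.mul_sum]
      refine Finset.sum_congr rfl fun i _ => ?_
      by_cases hk : cnt x i = 0
      · simp [hk, emp1_eq_zero_of_cnt x hk]
      · rw [Real.log_div (ne_of_gt (hν0 i hk)) (ne_of_gt (hμpos i hk)),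
          show ((m:ℝ)+1) * (emp1 x i * (Real.log (emp1 x i) - Real.log (μ i)))
            = (((m:ℝ)+1) * emp1 x i) * (Real.log (emp1 x i) - Real.log (μ i)) from by ring,
          mul_emp1_eq_cnt]
        ring
    have h4 : ∑ i, (cnt x i : ℝ) * Real.log (μ i)
        = ∑ i, (cnt x i : ℝ) * Real.log (emp1 x i) - ((m:ℝ)+1)*D := by linarith
    rw [h1, h2, h4, Real.exp_sub, div_eq_mul_inv, ← Real.exp_neg, mul_comm]
    refine mul_le_mul_of_nonneg_right ?_ (le_of_lt (Real.exp_pos _))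
    apply Real.exp_le_exp.2
    have hm : (0:ℝ) ≤ (m:ℝ)+1 := by positivity
    nlinarith
  · push_neg at hdom
    obtain ⟨i, hμi, hνi⟩ := hdom
    have hk : cnt x i ≠ 0 := fun h0 => hνi (emp1_eq_zero_of_cnt x h0)
    obtain ⟨t, hxt⟩ := exists_eq_of_cnt_ne_zero x hk
    rw [Finset.prod_eq_zero (Finset.mem_univ t) (by rw [hxt, hμi])]
    have h5 : 0 ≤ ∏ t, emp1 x (x t) := prod_nonneg_of (emp1_nonneg x) x
    positivity

lemma sum_emp_prod_le (n m : ℕ) :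
    ∑ x : Fin (m+1) → Fin n, ∏ t, (emp1 x) (x t) ≤ ((m:ℝ)+2)^n := by
  classical
  have hmaps : ∀ x : Fin (m+1) → Fin n, x ∈ Finset.univ →
      emp1 x ∈ Finset.univ.image (fun y : Fin (m+1) → Fin n => emp1 y) :=
    fun x _ => Finset.mem_image_of_mem _ (Finset.mem_univ x)
  rw [← Finset.sum_fiberwise_of_maps_to hmaps (fun x => ∏ t, (emp1 x) (x t))]
  calc ∑ p ∈ Finset.univ.image (fun y : Fin (m+1) → Fin n => emp1 y),
        ∑ x ∈ Finset.univ.filter (fun x => emp1 x = p), ∏ t, (emp1 x) (x t)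
      ≤ ∑ _p ∈ Finset.univ.image (fun y : Fin (m+1) → Fin n => emp1 y), (1:ℝ) := by
        refine Finset.sum_le_sum fun p hp => ?_
        obtain ⟨x₀, _, hx₀⟩ := Finset.mem_image.1 hp
        have hps : p ∈ simplex n := hx₀ ▸ emp1_mem_simplex x₀
        calc ∑ x ∈ Finset.univ.filter (fun x => emp1 x = p), ∏ t, (emp1 x) (x t)
            = ∑ x ∈ Finset.univ.filter (fun x : Fin (m+1) → Fin n => emp1 x = p),
                ∏ t, p (x t) := by
              refine Finset.sum_congr rfl fun x hx => ?_
              rw [(Finset.mem_filter.1 hx).2]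
          _ ≤ ∑ x : Fin (m+1) → Fin n, ∏ t, p (x t) :=
              Finset.sum_le_sum_of_subset_of_nonneg (Finset.filter_subset _ _)
                (fun x _ _ => prod_nonneg_of hps.1 x)
          _ = 1 := Eone p hps.2 (m+1)
    _ = ((Finset.univ.image (fun y : Fin (m+1) → Fin n => emp1 y)).card : ℝ) := by
        rw [Finset.sum_const, nsmul_eq_mul, mul_one]
    _ ≤ ((m:ℝ)+2)^n := by
        have hfac : Finset.univ.image (fun y : Fin (m+1) → Fin n => emp1 y)
            = (Finset.univ.image (fun y : Fin (m+1) → Fin n =>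
                (fun i => (⟨cnt y i, Nat.lt_succ_of_le (cnt_le y i)⟩ : Fin (m+2))))).image
              (fun q : Fin n → Fin (m+2) => fun i => ((q i : ℕ) : ℝ)/((m:ℝ)+1)) := by
          rw [Finset.image_image]
          refine Finset.image_congr fun y _ => ?_
          funext i
          rw [emp1_eq_cnt]
          simp
        rw [hfac]
        calc (((Finset.univ.image (fun y : Fin (m+1) → Fin n =>
                (fun i => (⟨cnt y i, Nat.lt_succ_of_le (cnt_le y i)⟩ : Fin (m+2))))).image
              (fun q : Fin n → Fin (m+2) => fun i => ((q i : ℕ) : ℝ)/((m:ℝ)+1))).card : ℝ)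
            ≤ ((Finset.univ : Finset (Fin n → Fin (m+2))).card : ℝ) := by
              have h1 := Finset.card_image_le (s := Finset.univ.image
                (fun y : Fin (m+1) → Fin n =>
                  (fun i => (⟨cnt y i, Nat.lt_succ_of_le (cnt_le y i)⟩ : Fin (m+2)))))
                (f := fun q : Fin n → Fin (m+2) => fun i => ((q i : ℕ) : ℝ)/((m:ℝ)+1))
              have h2 := Finset.card_le_univ (Finset.univ.image
                (fun y : Fin (m+1) → Fin n =>
                  (fun i => (⟨cnt y i, Nat.lt_succ_of_le (cnt_le y i)⟩ : Fin (m+2)))))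
              exact_mod_cast h1.trans h2
          _ = ((m:ℝ)+2)^n := by
              rw [Finset.card_univ, Fintype.card_fun, Fintype.card_fin, Fintype.card_fin]
              push_cast
              ring
lemma prEventIID_nonneg {n : ℕ} (μ : Fin n → ℝ) (hμ0 : ∀ i, 0 ≤ μ i) (m : ℕ)
    (Γ : Set (Fin n → ℝ)) : 0 ≤ prEventIID μ m Γ := by
  classical
  rw [prEventIID]
  refine Finset.sum_nonneg fun x _ => ?_
  by_cases hx : emp1 x ∈ Γ
  · rw [if_pos hx]; exact prod_nonneg_of hμ0 x
  · rw [if_neg hx]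

lemma upper_le {n : ℕ} (μ : Fin n → ℝ) (hμ0 : ∀ i, 0 ≤ μ i) (Γ : Set (Fin n → ℝ))
    (c : ℝ) (hc : ∀ ν ∈ Γ, (c : EReal) ≤ DKLe ν μ) (m : ℕ) :
    prEventIID μ m Γ ≤ ((m:ℝ)+2)^n * Real.exp (-(((m:ℝ)+1) * c)) := by
  classical
  rw [prEventIID]
  calc ∑ x : Fin (m+1) → Fin n, (if emp1 x ∈ Γ then ∏ t, μ (x t) else 0)
      ≤ ∑ x : Fin (m+1) → Fin n, Real.exp (-(((m:ℝ)+1) * c)) * ∏ t, (emp1 x) (x t) := by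
        refine Finset.sum_le_sum fun x _ => ?_
        by_cases hx : emp1 x ∈ Γ
        · rw [if_pos hx]; exact key_ub μ hμ0 x c (hc _ hx)
        · rw [if_neg hx]
          have := prod_nonneg_of (emp1_nonneg x) x
          positivity
    _ = Real.exp (-(((m:ℝ)+1) * c)) * ∑ x : Fin (m+1) → Fin n, ∏ t, (emp1 x) (x t) :=
        (Finset.mul_sum _ _ _).symm
    _ ≤ Real.exp (-(((m:ℝ)+1) * c)) * ((m:ℝ)+2)^n :=
        mul_le_mul_of_nonneg_left (sum_emp_prod_le n m) (le_of_lt (Real.exp_pos _))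
    _ = ((m:ℝ)+2)^n * Real.exp (-(((m:ℝ)+1) * c)) := mul_comm _ _

lemma lower_bound {n : ℕ} (μ : Fin n → ℝ) (hμ : μ ∈ simplex n) (Γ : Set (Fin n → ℝ))
    (hopen : OpenInV (simplex n) Γ) (ν : Fin n → ℝ) (hνΓ : ν ∈ Γ) (hνs : ν ∈ simplex n)
    (hdom : ∀ i, μ i = 0 → ν i = 0) (δ : ℝ) (hδ : 0 < δ) :
    ∀ᶠ m : ℕ in Filter.atTop,
      (1/2 : ℝ) * Real.exp (-(((m:ℝ)+1) * ((∑ i, ν i * Real.log (ν i / μ i)) + δ)))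
        ≤ prEventIID μ m Γ := by
  classical
  set D := ∑ i, ν i * Real.log (ν i / μ i) with hDdef
  set L : Fin n → ℝ := fun i => Real.log (ν i) - Real.log (μ i) with hL
  set M := ∑ j, |L j| with hM
  have hM0 : 0 ≤ M := Finset.sum_nonneg fun j _ => abs_nonneg _
  obtain ⟨ε, hε, hball⟩ := hopen ν hνΓ
  set δ'' := min (δ/(M+1)) (ε/2) with hδ''def
  have hδ''pos : 0 < δ'' := by
    apply lt_min
    · positivity
    · positivity
  have hνpos : ∀ i, ν i ≠ 0 → 0 < ν i := fun i hi => lt_of_le_of_ne (hνs.1 i) (Ne.symm hi)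
  have hμpos : ∀ i, ν i ≠ 0 → 0 < μ i := by
    intro i hi
    rcases (hμ.1 i).eq_or_lt with h | h
    · exact absurd (hdom i h.symm) hi
    · exact h
  have hDL : D = ∑ i, ν i * L i := by
    rw [hDdef]
    refine Finset.sum_congr rfl fun i _ => ?_
    by_cases hi : ν i = 0
    · simp [hi]
    · rw [Real.log_div hi (ne_of_gt (hμpos i hi)), hL]
  obtain ⟨N, hN⟩ := exists_nat_ge ((n:ℝ)^3/(2*δ''^2))
  rw [Filter.eventually_atTop]
  refine ⟨N, fun m hm => ?_⟩
  -- the good event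
  set G := Finset.univ.filter
    (fun x : Fin (m+1) → Fin n => dist1v (emp1 x) ν < δ'' ∧ ∀ t, ν (x t) ≠ 0) with hG
  -- Step B : pointwise bound on G
  have stepB : ∀ x ∈ G, Real.exp (-(((m:ℝ)+1) * (D + δ))) * ∏ t, ν (x t) ≤ ∏ t, μ (x t) := by
    intro x hx
    obtain ⟨hdist, hsupp⟩ := (Finset.mem_filter.1 hx).2
    have hcnt : ∀ i, cnt x i ≠ 0 → ν i ≠ 0 := by
      intro i hi
      obtain ⟨t, ht⟩ := exists_eq_of_cnt_ne_zero x hi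
      exact ht ▸ hsupp t
    have hν0 : ∀ i, cnt x i ≠ 0 → 0 < ν i := fun i hi => hνpos i (hcnt i hi)
    have hμ0' : ∀ i, cnt x i ≠ 0 → 0 < μ i := fun i hi => hμpos i (hcnt i hi)
    have h1 : ∏ t, μ (x t) = Real.exp (∑ i, (cnt x i : ℝ) * Real.log (μ i)) := by
      rw [prod_comp_eq_prod_pow, prod_pow_eq_exp μ (cnt x) hμ0']
    have h2 : ∏ t, ν (x t) = Real.exp (∑ i, (cnt x i : ℝ) * Real.log (ν i)) := by
      rw [prod_comp_eq_prod_pow, prod_pow_eq_exp ν (cnt x) hν0]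
    have h3 : ∑ i, (cnt x i : ℝ) * Real.log (ν i) - ∑ i, (cnt x i : ℝ) * Real.log (μ i)
        = ((m:ℝ)+1) * ∑ i, emp1 x i * L i := by
      rw [← Finset.sum_sub_distrib, Finset.mul_sum]
      refine Finset.sum_congr rfl fun i _ => ?_
      by_cases hk : cnt x i = 0
      · simp [hk, emp1_eq_zero_of_cnt x hk]
      · rw [show ((m:ℝ)+1) * (emp1 x i * L i) = (((m:ℝ)+1) * emp1 x i) * L i from by ring,
          mul_emp1_eq_cnt, hL]
        ring
    have h5 : ∑ i, emp1 x i * L i ≤ D + δ := by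
      have hsplit : ∑ i, emp1 x i * L i = ∑ i, ν i * L i + ∑ i, (emp1 x i - ν i) * L i := by
        rw [← Finset.sum_add_distrib]
        exact Finset.sum_congr rfl fun i _ => by ring
      have habs : ∑ i, (emp1 x i - ν i) * L i ≤ δ := by
        calc ∑ i, (emp1 x i - ν i) * L i ≤ ∑ i, |(emp1 x i - ν i) * L i| :=
              Finset.sum_le_sum fun i _ => le_abs_self _
          _ = ∑ i, |emp1 x i - ν i| * |L i| := by
              exact Finset.sum_congr rfl fun i _ => abs_mul _ _
          _ ≤ ∑ i, |emp1 x i - ν i| * M := by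
              refine Finset.sum_le_sum fun i _ => ?_
              refine mul_le_mul_of_nonneg_left ?_ (abs_nonneg _)
              exact Finset.single_le_sum (f := fun j => |L j|)
                (fun j _ => abs_nonneg _) (Finset.mem_univ i)
          _ = dist1v (emp1 x) ν * M := by rw [← Finset.sum_mul]; rfl
          _ ≤ δ'' * M := mul_le_mul_of_nonneg_right (le_of_lt hdist) hM0
          _ ≤ (δ/(M+1)) * M := mul_le_mul_of_nonneg_right (min_le_left _ _) hM0
          _ ≤ δ := by
              rw [div_mul_eq_mul_div, div_le_iff₀ (by positivity : (0:ℝ) < M+1)]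
              nlinarith
      rw [hsplit, ← hDL] at *
      linarith
    rw [h1, h2]
    rw [← Real.exp_add]
    apply Real.exp_le_exp.2
    have hm1 : (0:ℝ) ≤ (m:ℝ)+1 := by positivity
    nlinarith [h3, h5]
  -- Step A : restrict the probability to G
  have stepA : ∑ x ∈ G, ∏ t, μ (x t) ≤ prEventIID μ m Γ := by
    rw [prEventIID]
    have hsub : ∀ x ∈ G, (∏ t, μ (x t)) = (if emp1 x ∈ Γ then ∏ t, μ (x t) else 0) := by
      intro x hx
      obtain ⟨hdist, _⟩ := (Finset.mem_filter.1 hx).2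
      have hmem : emp1 x ∈ Γ := by
        refine hball (emp1 x) (emp1_mem_simplex x) ?_
        calc dist1v (emp1 x) ν < δ'' := hdist
          _ ≤ ε/2 := min_le_right _ _
          _ < ε := by linarith
      rw [if_pos hmem]
    rw [Finset.sum_congr rfl hsub]
    refine Finset.sum_le_sum_of_subset_of_nonneg (Finset.filter_subset _ _) ?_
    intro x _ _
    by_cases hx : emp1 x ∈ Γ
    · rw [if_pos hx]; exact prod_nonneg_of hμ.1 x
    · rw [if_neg hx]
  -- Step C/D : mass of the good event under ν
  have stepC : ∑ x ∈ G, ∏ t, ν (x t)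
      = ∑ x ∈ Finset.univ.filter (fun x : Fin (m+1) → Fin n => dist1v (emp1 x) ν < δ''),
          ∏ t, ν (x t) := by
    rw [hG, ← Finset.filter_filter]
    refine (Finset.sum_filter_of_ne ?_)
    intro x hx hne
    by_contra hcon
    push_neg at hcon
    obtain ⟨t, ht⟩ := hcon
    exact hne (Finset.prod_eq_zero (Finset.mem_univ t) ht)
  have stepD : (1/2 : ℝ) ≤ ∑ x ∈ Finset.univ.filter
      (fun x : Fin (m+1) → Fin n => dist1v (emp1 x) ν < δ''), ∏ t, ν (x t) := by
    have hsplit := Finset.sum_filter_add_sum_filter_not Finset.univ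
      (fun x : Fin (m+1) → Fin n => dist1v (emp1 x) ν < δ'') (fun x => ∏ t, ν (x t))
    have hone : ∑ x : Fin (m+1) → Fin n, ∏ t, ν (x t) = 1 := Eone ν hνs.2 (m+1)
    have hfar := prob_far_le (m := m) ν hνs.1 hνs.2 δ'' hδ''pos
    have hmN : (n:ℝ)^3 / (4*((m:ℝ)+1)*δ''^2) ≤ 1/2 := by
      rw [div_le_iff₀ (by positivity)]
      have hmN' : ((n:ℝ)^3/(2*δ''^2)) ≤ (m:ℝ) := by
        calc ((n:ℝ)^3/(2*δ''^2)) ≤ (N:ℝ) := hN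
          _ ≤ (m:ℝ) := by exact_mod_cast hm
      rw [div_le_iff₀ (by positivity : (0:ℝ) < 2*δ''^2)] at hmN'
      nlinarith [hδ''pos, sq_nonneg δ'']
    linarith
  -- combine
  calc (1/2 : ℝ) * Real.exp (-(((m:ℝ)+1) * (D + δ)))
      ≤ (∑ x ∈ G, ∏ t, ν (x t)) * Real.exp (-(((m:ℝ)+1) * (D + δ))) := by
        refine mul_le_mul_of_nonneg_right ?_ (le_of_lt (Real.exp_pos _))
        rw [stepC]; exact stepD
    _ = ∑ x ∈ G, Real.exp (-(((m:ℝ)+1) * (D + δ))) * ∏ t, ν (x t) := by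
        rw [Finset.sum_mul]
        exact Finset.sum_congr rfl fun x _ => mul_comm _ _
    _ ≤ ∑ x ∈ G, ∏ t, μ (x t) := Finset.sum_le_sum stepB
    _ ≤ prEventIID μ m Γ := stepA
/-- **Sanov's theorem for a finite alphabet.**  For an i.i.d. process
with one-dimensional marginal `μ ∈ S_n`, the empirical singleton measures satisfy the
LDP with rate function `I(ν) = D(ν‖μ)`: for every open `Γ ⊆ S_n`,
`−inf_Γ D(·‖μ) ≤ liminf (1/l) log Pr{φ(x_1^l) ∈ Γ}`, and for every closed `Γ ⊆ S_n`,
`limsup (1/l) log Pr{φ(x_1^l) ∈ Γ} ≤ −inf_Γ D(·‖μ)`. -/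
theorem stmt14 {n : ℕ} (μ : Fin n → ℝ) (hμ : μ ∈ simplex n)
    (Γ : Set (Fin n → ℝ)) (hΓ : Γ ⊆ simplex n) :
    (OpenInV (simplex n) Γ →
      -(⨅ ν ∈ Γ, DKLe ν μ)
        ≤ Filter.liminf
            (fun m : ℕ => ((((m:ℝ)+1)⁻¹ : ℝ) : EReal) * elog (prEventIID μ m Γ))
            Filter.atTop) ∧
    (ClosedInV (simplex n) Γ →
      Filter.limsup
          (fun m : ℕ => ((((m:ℝ)+1)⁻¹ : ℝ) : EReal) * elog (prEventIID μ m Γ))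
          Filter.atTop
        ≤ -(⨅ ν ∈ Γ, DKLe ν μ)) := by
  classical
  constructor
  · -- lower bound for open sets
    intro hopen
    refine EReal.neg_le.mpr (le_iInf₂ fun ν hν => EReal.neg_le.mp ?_)
    by_cases hdom : ∀ i, μ i = 0 → ν i = 0
    · have hνs := hΓ hν
      set D := ∑ i, ν i * Real.log (ν i / μ i) with hD
      have hDKL : DKLe ν μ = ((D:ℝ):EReal) := by rw [DKLe, if_pos hdom]
      rw [hDKL, ← EReal.coe_neg]
      have key : ∀ δ : ℝ, 0 < δ → (((-(D+δ)):ℝ):EReal) ≤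
          Filter.liminf
            (fun m : ℕ => ((((m:ℝ)+1)⁻¹ : ℝ) : EReal) * elog (prEventIID μ m Γ))
            Filter.atTop := by
        intro δ hδ
        have hev := lower_bound μ hμ Γ hopen ν hν hνs hdom δ hδ
        have hle : ∀ᶠ m : ℕ in Filter.atTop,
            ((((m:ℝ)+1)⁻¹ * Real.log (1/2) - (D+δ) : ℝ) : EReal)
              ≤ ((((m:ℝ)+1)⁻¹ : ℝ) : EReal) * elog (prEventIID μ m Γ) := by
          filter_upwards [hev] with m hm
          have hhalf : (0:ℝ) < (1/2 : ℝ) * Real.exp (-(((m:ℝ)+1) * (D + δ))) := by positivity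
          have hpos : 0 < prEventIID μ m Γ := lt_of_lt_of_le hhalf hm
          rw [elog, if_neg (not_le.2 hpos), ← EReal.coe_mul, EReal.coe_le_coe_iff]
          have hlog : Real.log ((1/2:ℝ) * Real.exp (-(((m:ℝ)+1) * (D + δ))))
              ≤ Real.log (prEventIID μ m Γ) := Real.log_le_log hhalf hm
          rw [Real.log_mul (by norm_num) (ne_of_gt (Real.exp_pos _)), Real.log_exp] at hlog
          have hm1 : (0:ℝ) < (m:ℝ)+1 := by positivity
          have h2 := mul_le_mul_of_nonneg_left hlog (le_of_lt (inv_pos.2 hm1))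
          calc ((m:ℝ)+1)⁻¹ * Real.log (1/2) - (D+δ)
              = ((m:ℝ)+1)⁻¹ * (Real.log (1/2) + -(((m:ℝ)+1) * (D + δ))) := by
                field_simp
                ring
            _ ≤ ((m:ℝ)+1)⁻¹ * Real.log (prEventIID μ m Γ) := h2
        have h0 : Filter.Tendsto (fun m : ℕ => (m:ℝ)+1) Filter.atTop Filter.atTop :=
          tendsto_atTop_add_const_right _ 1 tendsto_natCast_atTop_atTop
        have htend : Filter.Tendsto
            (fun m : ℕ => ((((m:ℝ)+1)⁻¹ * Real.log (1/2) - (D+δ) : ℝ) : EReal))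
            Filter.atTop (nhds (((-(D+δ)):ℝ):EReal)) := by
          rw [EReal.tendsto_coe]
          have h1 : Filter.Tendsto (fun m : ℕ => ((m:ℝ)+1)⁻¹) Filter.atTop (nhds 0) :=
            h0.inv_tendsto_atTop
          have h2 := (h1.mul_const (Real.log (1/2))).sub_const (D+δ)
          simpa using h2
        calc (((-(D+δ)):ℝ):EReal)
            = Filter.liminf
                (fun m : ℕ => ((((m:ℝ)+1)⁻¹ * Real.log (1/2) - (D+δ) : ℝ) : EReal))
                Filter.atTop := (htend.liminf_eq).symm
          _ ≤ _ := Filter.liminf_le_liminf hle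
      by_contra hcon
      push_neg at hcon
      obtain ⟨y, hy1, hy2⟩ := EReal.lt_iff_exists_real_btwn.1 hcon
      have hyD : y < -D := by exact_mod_cast hy2
      have hkey := key (-D - y) (by linarith)
      rw [show -(D + (-D - y)) = y from by ring] at hkey
      exact absurd (lt_of_le_of_lt hkey hy1) (lt_irrefl _)
    · rw [DKLe, if_neg hdom]
      simp
  · -- upper bound
    intro _
    by_cases hIbot : (⨅ ν ∈ Γ, DKLe ν μ) = ⊥
    · rw [hIbot]; simp
    by_cases hItop : (⨅ ν ∈ Γ, DKLe ν μ) = ⊤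
    · have hPr : ∀ m, prEventIID μ m Γ = 0 := by
        intro m
        rw [prEventIID]
        refine Finset.sum_eq_zero fun x _ => ?_
        by_cases hx : emp1 x ∈ Γ
        · rw [if_pos hx]
          have hT : DKLe (emp1 x) μ = ⊤ := iInf_eq_top.mp (iInf_eq_top.mp hItop (emp1 x)) hx
          have hdom : ¬ ∀ i, μ i = 0 → emp1 x i = 0 := by
            intro hdom
            rw [DKLe, if_pos hdom] at hT
            exact EReal.coe_ne_top _ hT
          push_neg at hdom
          obtain ⟨i, hμi, hνi⟩ := hdom
          have hk : cnt x i ≠ 0 := fun h0 => hνi (emp1_eq_zero_of_cnt x h0)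
          obtain ⟨t, hxt⟩ := exists_eq_of_cnt_ne_zero x hk
          exact Finset.prod_eq_zero (Finset.mem_univ t) (by rw [hxt, hμi])
        · rw [if_neg hx]
      have hf : ∀ m : ℕ,
          ((((m:ℝ)+1)⁻¹ : ℝ) : EReal) * elog (prEventIID μ m Γ) = (⊥ : EReal) := by
        intro m
        rw [hPr m, elog, if_pos le_rfl]
        exact EReal.coe_mul_bot_of_pos (by positivity)
      rw [hItop]
      have := Filter.limsup_congr (f := Filter.atTop)
        (u := fun m : ℕ => ((((m:ℝ)+1)⁻¹ : ℝ) : EReal) * elog (prEventIID μ m Γ))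
        (v := fun _ : ℕ => (⊥ : EReal)) (Filter.Eventually.of_forall hf)
      rw [this, Filter.limsup_const]
      simp
    · set c := (⨅ ν ∈ Γ, DKLe ν μ).toReal with hc
      have hcI : ((c:ℝ):EReal) = ⨅ ν ∈ Γ, DKLe ν μ := EReal.coe_toReal hItop hIbot
      have hcle : ∀ ν ∈ Γ, ((c:ℝ):EReal) ≤ DKLe ν μ := fun ν hν => hcI ▸ iInf₂_le ν hν
      have hub := fun m => upper_le μ hμ.1 Γ c hcle m
      have hle : ∀ᶠ m : ℕ in Filter.atTop,
          ((((m:ℝ)+1)⁻¹ : ℝ) : EReal) * elog (prEventIID μ m Γ)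
            ≤ ((((m:ℝ)+1)⁻¹ * ((n:ℝ) * Real.log ((m:ℝ)+2)) - c : ℝ) : EReal) := by
        refine Filter.Eventually.of_forall fun m => ?_
        rcases le_or_gt (prEventIID μ m Γ) 0 with hp | hp
        · rw [elog, if_pos hp, EReal.coe_mul_bot_of_pos
            (by positivity : (0:ℝ) < ((m:ℝ)+1)⁻¹)]
          exact bot_le
        · rw [elog, if_neg (not_le.2 hp), ← EReal.coe_mul, EReal.coe_le_coe_iff]
          have hlog : Real.log (prEventIID μ m Γ)
              ≤ Real.log (((m:ℝ)+2)^n * Real.exp (-(((m:ℝ)+1) * c))) :=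
            Real.log_le_log hp (hub m)
          rw [Real.log_mul (by positivity) (ne_of_gt (Real.exp_pos _)), Real.log_exp,
            Real.log_pow] at hlog
          have hm1 : (0:ℝ) < (m:ℝ)+1 := by positivity
          have h2 := mul_le_mul_of_nonneg_left hlog (le_of_lt (inv_pos.2 hm1))
          calc ((m:ℝ)+1)⁻¹ * Real.log (prEventIID μ m Γ)
              ≤ ((m:ℝ)+1)⁻¹ * ((n:ℝ) * Real.log ((m:ℝ)+2) + -(((m:ℝ)+1) * c)) := h2
            _ = ((m:ℝ)+1)⁻¹ * ((n:ℝ) * Real.log ((m:ℝ)+2)) - c := by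
                field_simp
                ring
      have htend : Filter.Tendsto
          (fun m : ℕ => ((((m:ℝ)+1)⁻¹ * ((n:ℝ) * Real.log ((m:ℝ)+2)) - c : ℝ) : EReal))
          Filter.atTop (nhds (((-c : ℝ)) : EReal)) := by
        rw [EReal.tendsto_coe]
        have h1 : (fun m : ℕ => Real.log ((m:ℝ)+2)) =o[Filter.atTop]
            (fun m : ℕ => (m:ℝ)+1) := by
          have h2 := Real.isLittleO_log_id_atTop.comp_tendsto
            (tendsto_atTop_add_const_right Filter.atTop 2 tendsto_natCast_atTop_atTop)
          refine h2.trans_isBigO (Asymptotics.IsBigO.of_bound 2 ?_)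
          refine Filter.Eventually.of_forall fun m => ?_
          have hm0 : (0:ℝ) ≤ (m:ℝ) := Nat.cast_nonneg m
          simp only [Function.comp, Real.norm_eq_abs, id]
          rw [abs_of_nonneg (by linarith), abs_of_nonneg (by linarith)]
          linarith
        have h3 := h1.tendsto_div_nhds_zero
        have h4 := (h3.const_mul (n:ℝ)).sub_const c
        have h6 : (fun m : ℕ => ((m:ℝ)+1)⁻¹ * ((n:ℝ) * Real.log ((m:ℝ)+2)) - c)
            = fun m : ℕ => (n:ℝ) * (Real.log ((m:ℝ)+2) / ((m:ℝ)+1)) - c := by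
          funext m; rw [div_eq_mul_inv]; ring
        rw [h6]
        simpa using h4
      calc Filter.limsup
            (fun m : ℕ => ((((m:ℝ)+1)⁻¹ : ℝ) : EReal) * elog (prEventIID μ m Γ))
            Filter.atTop
          ≤ Filter.limsup
            (fun m : ℕ => ((((m:ℝ)+1)⁻¹ * ((n:ℝ) * Real.log ((m:ℝ)+2)) - c : ℝ) : EReal))
            Filter.atTop := Filter.limsup_le_limsup hle
        _ = ((-c:ℝ):EReal) := htend.limsup_eq
        _ = -(⨅ ν ∈ Γ, DKLe ν μ) := by rw [EReal.coe_neg, hcI]
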